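/- Let n = 2k + r with 2 ≤ r ≤ k − 3 and k ≥ 5. Then the diameter of SG(n,k) is at least 4. Specifically, with t = k−3−r, the vertices A = {1,3,5} ∪ {7+2i : 0 ≤ i ≤ t} ∪ {7+2t+3j : 1 ≤ j ≤ r−1} and B = {1,3,6} ∪ {8+2i : 0 ≤ i ≤ t} ∪ {8+2t+3j : 1 ≤ j ≤ r−1} satisfy dist(A,B) ≥ 4. -/

import Mathlib

/-- The cycle graph `C_n` on vertex set `ZMod n` (representing `{1,…,n}` cyclically). -/
def CycleGraph (n : ℕ) : SimpleGraph (ZMod n) where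
  Adj i j := i ≠ j ∧ (i + 1 = j ∨ j + 1 = i)
  symm := ⟨fun i j ⟨h, h2⟩ => ⟨h.symm, h2.symm⟩⟩
  loopless := ⟨fun i ⟨h, _⟩ => h rfl⟩

/-- A subset of `ZMod n` is 2-stable if it contains no two cyclically consecutive elements. -/
def Stable2 (n : ℕ) (S : Finset (ZMod n)) : Prop := ∀ i ∈ S, i + 1 ∉ S

/-- Vertices of the Schrijver graph: 2-stable `k`-subsets of `{1,…,n}`. -/
def SGVert (n k : ℕ) : Type := {S : Finset (ZMod n) // S.card = k ∧ Stable2 n S}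

/-- The Schrijver graph `SG(n,k)`: 2-stable `k`-subsets, adjacent iff disjoint. -/
def SG (n k : ℕ) : SimpleGraph (SGVert n k) where
  Adj A B := A ≠ B ∧ Disjoint A.1 B.1
  symm := ⟨fun A B ⟨h, h2⟩ => ⟨h.symm, h2.symm⟩⟩
  loopless := ⟨fun A ⟨h, _⟩ => h rfl⟩

set_option linter.unusedSectionVars false
set_option linter.unusedVariables false

open Finset


-- helper: cast injectivity / membership
lemma cast_inj_lt {n a b : ℕ} (ha : a < n) (hb : b < n) (h : (a : ZMod n) = b) : a = b := by
  haveI : NeZero n := ⟨by omega⟩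
  have := congrArg ZMod.val h
  rwa [ZMod.val_cast_of_lt ha, ZMod.val_cast_of_lt hb] at this

lemma mem_image_cast {n m : ℕ} {N : Finset ℕ} (hall : ∀ a ∈ N, a < n) (hm : m < n) :
    (m : ZMod n) ∈ N.image (fun x : ℕ => (x : ZMod n)) ↔ m ∈ N := by
  constructor
  · rintro h
    obtain ⟨a, ha, hae⟩ := Finset.mem_image.mp h
    rwa [cast_inj_lt (hall a ha) hm hae] at ha
  · intro h; exact Finset.mem_image_of_mem _ h

lemma card_image_cast {n : ℕ} {N : Finset ℕ} (hall : ∀ a ∈ N, a < n) :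
    (N.image (fun x : ℕ => (x : ZMod n))).card = N.card := by
  apply Finset.card_image_of_injOn
  intro a ha b hb h
  exact cast_inj_lt (hall a ha) (hall b hb) h

-- the counting lemma
lemma count_lemma {n : ℕ} (C R s : Finset (ZMod n)) (hst : ∀ i ∈ C, i + 1 ∉ C)
    (h1 : ∀ x ∈ C, x ∉ s → x ∈ R) (h2 : ∀ x ∈ C, x ∈ s → x - 1 ∈ R)
    (e : ZMod n) (heC : e ∉ C) (heR : e ∈ R) (hes : e + 1 ∉ s) :
    C.card < R.card := by
  classical
  set g : ZMod n → ZMod n := fun x => if x ∈ s then x - 1 else x with hg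
  have hinj : Set.InjOn g C := by
    intro x hx y hy hxy
    simp only [hg] at hxy
    by_cases hxs : x ∈ s <;> by_cases hys : y ∈ s <;> simp [hxs, hys] at hxy
    · linear_combination hxy
    · exfalso; apply hst y hy; rw [← hxy]; simpa using hx
    · exfalso; apply hst x hx; rw [hxy]; simpa using hy
    · exact hxy
  have hsub : C.image g ⊆ R.erase e := by
    intro z hz
    obtain ⟨x, hx, rfl⟩ := Finset.mem_image.mp hz
    simp only [hg]
    by_cases hxs : x ∈ s
    · simp only [hxs, if_true]
      refine Finset.mem_erase.mpr ⟨?_, h2 x hx hxs⟩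
      intro hcon
      apply hes
      have : x = e + 1 := by linear_combination hcon
      rwa [this] at hxs
    · simp only [hxs, if_false]
      exact Finset.mem_erase.mpr ⟨fun hcon => heC (hcon ▸ hx), h1 x hx hxs⟩
  calc C.card = (C.image g).card := (Finset.card_image_of_injOn hinj).symm
    _ ≤ (R.erase e).card := Finset.card_le_card hsub
    _ < R.card := Finset.card_erase_lt_of_mem heR


def NA (k r : ℕ) : Finset ℕ :=
  ({1, 3, 5} : Finset ℕ) ∪ (Finset.range (k - 3 - r + 1)).image (fun i => 7 + 2 * i) ∪
    (Finset.Icc 1 (r - 1)).image (fun j => 7 + 2 * (k - 3 - r) + 3 * j)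

def NB (k r : ℕ) : Finset ℕ :=
  ({1, 3, 6} : Finset ℕ) ∪ (Finset.range (k - 3 - r + 1)).image (fun i => 8 + 2 * i) ∪
    (Finset.Icc 1 (r - 1)).image (fun j => 8 + 2 * (k - 3 - r) + 3 * j)

def NRA (k r : ℕ) : Finset ℕ :=
  (range (k - 3 - r + 3)).image (fun i => 2 + 2 * i) ∪
    (range (r - 1)).image (fun j => 8 + 2 * (k - 3 - r) + 3 * j) ∪ {2 * (k - 3 - r) + 3 * r + 5}

def NSA (k r : ℕ) : Finset ℕ :=
  insert 0 ((range (r - 1)).image (fun j => 9 + 2 * (k - 3 - r) + 3 * j))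

def NRB (k r : ℕ) : Finset ℕ :=
  ({0, 2, 4} : Finset ℕ) ∪ (range (k - 3 - r + 1)).image (fun i => 7 + 2 * i) ∪
    (range (r - 1)).image (fun j => 9 + 2 * (k - 3 - r) + 3 * j)

def NSB (k r : ℕ) : Finset ℕ :=
  insert 5 ((range (r - 1)).image (fun j => 10 + 2 * (k - 3 - r) + 3 * j))

lemma mem_NA {k r m : ℕ} : m ∈ NA k r ↔
    (m = 1 ∨ m = 3 ∨ m = 5) ∨ (∃ i, i < k - 3 - r + 1 ∧ 7 + 2 * i = m) ∨
      (∃ j, (1 ≤ j ∧ j ≤ r - 1) ∧ 7 + 2 * (k - 3 - r) + 3 * j = m) := by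
  simp [NA, Finset.mem_union, Finset.mem_image, Finset.mem_insert, Finset.mem_singleton,
    Finset.mem_range, Finset.mem_Icc, or_assoc]

lemma mem_NB {k r m : ℕ} : m ∈ NB k r ↔
    (m = 1 ∨ m = 3 ∨ m = 6) ∨ (∃ i, i < k - 3 - r + 1 ∧ 8 + 2 * i = m) ∨
      (∃ j, (1 ≤ j ∧ j ≤ r - 1) ∧ 8 + 2 * (k - 3 - r) + 3 * j = m) := by
  simp [NB, Finset.mem_union, Finset.mem_image, Finset.mem_insert, Finset.mem_singleton,
    Finset.mem_range, Finset.mem_Icc, or_assoc]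

lemma mem_NRA {k r m : ℕ} : m ∈ NRA k r ↔
    (∃ i, i < k - 3 - r + 3 ∧ 2 + 2 * i = m) ∨ (∃ j, j < r - 1 ∧ 8 + 2 * (k - 3 - r) + 3 * j = m) ∨
      m = 2 * (k - 3 - r) + 3 * r + 5 := by
  simp [NRA, Finset.mem_union, Finset.mem_image, Finset.mem_range, Finset.mem_singleton, or_assoc]
  exact or_rotate

lemma mem_NSA {k r m : ℕ} : m ∈ NSA k r ↔
    m = 0 ∨ (∃ j, j < r - 1 ∧ 9 + 2 * (k - 3 - r) + 3 * j = m) := by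
  simp [NSA, Finset.mem_insert, Finset.mem_image, Finset.mem_range]

lemma mem_NRB {k r m : ℕ} : m ∈ NRB k r ↔
    (m = 0 ∨ m = 2 ∨ m = 4) ∨ (∃ i, i < k - 3 - r + 1 ∧ 7 + 2 * i = m) ∨
      (∃ j, j < r - 1 ∧ 9 + 2 * (k - 3 - r) + 3 * j = m) := by
  simp [NRB, Finset.mem_union, Finset.mem_image, Finset.mem_insert, Finset.mem_singleton,
    Finset.mem_range, or_assoc]

lemma mem_NSB {k r m : ℕ} : m ∈ NSB k r ↔
    m = 5 ∨ (∃ j, j < r - 1 ∧ 10 + 2 * (k - 3 - r) + 3 * j = m) := by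
  simp [NSB, Finset.mem_insert, Finset.mem_image, Finset.mem_range]

section params
variable {k r : ℕ} (hk : 5 ≤ k) (hr1 : 2 ≤ r) (hr2 : r ≤ k - 3)

include hk hr1 hr2

lemma NA_lt : ∀ m ∈ NA k r, m < 2 * k + r := by
  intro m hm
  rcases mem_NA.mp hm with h | ⟨i, hi, rfl⟩ | ⟨j, hj, rfl⟩ <;> omega

lemma NB_lt : ∀ m ∈ NB k r, m < 2 * k + r := by
  intro m hm
  rcases mem_NB.mp hm with h | ⟨i, hi, rfl⟩ | ⟨j, hj, rfl⟩ <;> omega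

lemma NRA_lt : ∀ m ∈ NRA k r, m < 2 * k + r := by
  intro m hm
  rcases mem_NRA.mp hm with ⟨i, hi, rfl⟩ | ⟨j, hj, rfl⟩ | rfl <;> omega

lemma NSA_lt : ∀ m ∈ NSA k r, m < 2 * k + r := by
  intro m hm
  rcases mem_NSA.mp hm with rfl | ⟨j, hj, rfl⟩ <;> omega

lemma NRB_lt : ∀ m ∈ NRB k r, m < 2 * k + r := by
  intro m hm
  rcases mem_NRB.mp hm with h | ⟨i, hi, rfl⟩ | ⟨j, hj, rfl⟩ <;> omega

lemma NSB_lt : ∀ m ∈ NSB k r, m < 2 * k + r := by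
  intro m hm
  rcases mem_NSB.mp hm with rfl | ⟨j, hj, rfl⟩ <;> omega

lemma coverA : ∀ m, m < 2 * k + r → m ∈ NA k r ∨ m ∈ NRA k r ∨ m ∈ NSA k r := by
  intro m hm
  simp only [mem_NA, mem_NRA, mem_NSA]
  by_cases h0 : m = 0
  · exact Or.inr (Or.inr (Or.inl h0))
  by_cases hsmall : m ≤ 6 + 2 * (k - 3 - r)
  · rcases Nat.even_or_odd m with he | ho
    · obtain ⟨c, hc⟩ := he
      exact Or.inr (Or.inl (Or.inl ⟨(m - 2) / 2, by omega, by omega⟩))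
    · obtain ⟨c, hc⟩ := ho
      by_cases h5 : m ≤ 5
      · exact Or.inl (Or.inl (by omega))
      · exact Or.inl (Or.inr (Or.inl ⟨(m - 7) / 2, by omega, by omega⟩))
  · -- m ≥ 7 + 2t
    set t := k - 3 - r with ht
    have hq : 7 + 2 * t ≤ m := by omega
    set q := m - (7 + 2 * t) with hqdef
    have h3 : q % 3 = 0 ∨ q % 3 = 1 ∨ q % 3 = 2 := by omega
    rcases h3 with h3 | h3 | h3
    · -- q % 3 = 0 : m = 7+2t+3j
      by_cases hj0 : q = 0
      · exact Or.inl (Or.inr (Or.inl ⟨t, by omega, by omega⟩))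
      · exact Or.inl (Or.inr (Or.inr ⟨q / 3, ⟨by omega, by omega⟩, by omega⟩))
    · -- q % 3 = 1 : m = 8+2t+3j
      by_cases hje : q / 3 = r - 1
      · exact Or.inr (Or.inl (Or.inr (Or.inr (by omega))))
      · exact Or.inr (Or.inl (Or.inr (Or.inl ⟨q / 3, by omega, by omega⟩)))
    · -- q % 3 = 2 : m = 9+2t+3j
      exact Or.inr (Or.inr (Or.inr ⟨q / 3, by omega, by omega⟩))

lemma coverB : ∀ m, m < 2 * k + r → m ∈ NB k r ∨ m ∈ NRB k r ∨ m ∈ NSB k r := by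
  intro m hm
  simp only [mem_NB, mem_NRB, mem_NSB]
  set t := k - 3 - r with ht
  by_cases h6 : m ≤ 6
  · interval_cases m
    · exact Or.inr (Or.inl (Or.inl (by omega)))
    · exact Or.inl (Or.inl (by omega))
    · exact Or.inr (Or.inl (Or.inl (by omega)))
    · exact Or.inl (Or.inl (by omega))
    · exact Or.inr (Or.inl (Or.inl (by omega)))
    · exact Or.inr (Or.inr (Or.inl rfl))
    · exact Or.inl (Or.inl (by omega))
  by_cases hsmall : m ≤ 8 + 2 * t
  · rcases Nat.even_or_odd m with he | ho
    · obtain ⟨c, hc⟩ := he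
      exact Or.inl (Or.inr (Or.inl ⟨(m - 8) / 2, by omega, by omega⟩))
    · obtain ⟨c, hc⟩ := ho
      exact Or.inr (Or.inl (Or.inr (Or.inl ⟨(m - 7) / 2, by omega, by omega⟩)))
  · have hq : 9 + 2 * t ≤ m := by omega
    set q := m - (9 + 2 * t) with hqdef
    have h3 : q % 3 = 0 ∨ q % 3 = 1 ∨ q % 3 = 2 := by omega
    rcases h3 with h3 | h3 | h3
    · exact Or.inr (Or.inl (Or.inr (Or.inr ⟨q / 3, by omega, by omega⟩)))
    · exact Or.inr (Or.inr (Or.inr ⟨q / 3, by omega, by omega⟩))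
    · exact Or.inl (Or.inr (Or.inr ⟨q / 3 + 1, by omega, by omega⟩))

lemma NRA_card : (NRA k r).card = k := by
  rw [NRA]
  rw [Finset.card_union_of_disjoint, Finset.card_union_of_disjoint]
  · rw [Finset.card_image_of_injOn (by intro a _ b _ h; dsimp only at h; omega),
      Finset.card_image_of_injOn (by intro a _ b _ h; dsimp only at h; omega), Finset.card_range,
      Finset.card_range, Finset.card_singleton]
    omega
  · rw [Finset.disjoint_left]
    intro a ha hb
    simp only [Finset.mem_image, Finset.mem_range] at ha hb
    obtain ⟨i, hi, rfl⟩ := ha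
    obtain ⟨j, hj, h⟩ := hb
    omega
  · rw [Finset.disjoint_left]
    intro a ha hb
    simp only [Finset.mem_union, Finset.mem_image, Finset.mem_range, Finset.mem_singleton] at ha hb
    rcases ha with ⟨i, hi, rfl⟩ | ⟨j, hj, rfl⟩ <;> omega

lemma NRB_card : (NRB k r).card = k := by
  rw [NRB]
  rw [Finset.card_union_of_disjoint, Finset.card_union_of_disjoint]
  · rw [Finset.card_image_of_injOn (by intro a _ b _ h; dsimp only at h; omega),
      Finset.card_image_of_injOn (by intro a _ b _ h; dsimp only at h; omega), Finset.card_range,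
      Finset.card_range]
    have h3 : ({0, 2, 4} : Finset ℕ).card = 3 := by decide
    omega
  · rw [Finset.disjoint_left]
    intro a ha hb
    simp only [Finset.mem_insert, Finset.mem_singleton, Finset.mem_image, Finset.mem_range] at ha hb
    obtain ⟨i, hi, h⟩ := hb
    omega
  · rw [Finset.disjoint_left]
    intro a ha hb
    simp only [Finset.mem_union, Finset.mem_insert, Finset.mem_singleton, Finset.mem_image,
      Finset.mem_range] at ha hb
    obtain ⟨j, hj, h⟩ := hb
    rcases ha with (rfl | rfl | rfl) | ⟨i, hi, rfl⟩ <;> omega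

end params

lemma forced {n k : ℕ} (hn0 : 12 ≤ n) (Nbase NR NS : Finset ℕ)
    (hbase_lt : ∀ m ∈ Nbase, m < n) (hR_lt : ∀ m ∈ NR, m < n) (hS_lt : ∀ m ∈ NS, m < n)
    (hcover : ∀ m, m < n → m ∈ Nbase ∨ m ∈ NR ∨ m ∈ NS)
    (hsec : ∀ y ∈ NS, ((y : ZMod n) - 1) ∈ NR.image (fun x : ℕ => (x : ZMod n)))
    (hRcard : NR.card = k)
    (e : ℕ) (he_lt : e + 1 < n) (heR : e ∈ NR) (heS : e + 1 ∉ NS)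
    (C : Finset (ZMod n)) (hst : ∀ i ∈ C, i + 1 ∉ C) (hcard : C.card = k)
    (hdisj : Disjoint C (Nbase.image (fun x : ℕ => (x : ZMod n)))) :
    (e : ZMod n) ∈ C := by
  haveI : NeZero n := ⟨by omega⟩
  by_contra heC
  have hlt := count_lemma C (NR.image (fun x : ℕ => (x : ZMod n)))
      (NS.image (fun x : ℕ => (x : ZMod n))) hst
    (fun x hx hxs => by
      have hval : ((x.val : ℕ) : ZMod n) = x := ZMod.natCast_zmod_val x
      have hvlt : x.val < n := ZMod.val_lt x
      rcases hcover x.val hvlt with h | h | h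
      · exact absurd ((Finset.disjoint_left.mp hdisj) hx)
          (by rw [← hval]; exact fun hc => hc (Finset.mem_image_of_mem _ h))
      · rw [← hval]; exact Finset.mem_image_of_mem _ h
      · exact absurd (by rw [← hval]; exact Finset.mem_image_of_mem _ h) hxs)
    (fun x hx hxs => by
      obtain ⟨y, hy, rfl⟩ := Finset.mem_image.mp hxs
      exact hsec y hy)
    (e : ZMod n) heC (Finset.mem_image_of_mem _ heR)
    (by
      intro hmem
      have : ((e + 1 : ℕ) : ZMod n) ∈ NS.image (fun x : ℕ => (x : ZMod n)) := by
        push_cast; exact hmem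
      exact heS ((mem_image_cast hS_lt he_lt).mp this))
  rw [card_image_cast hR_lt, hRcard, hcard] at hlt
  omega

section inst
variable {n k r : ℕ} (hk : 5 ≤ k) (hr1 : 2 ≤ r) (hr2 : r ≤ k - 3) (hn : n = 2 * k + r)
include hk hr1 hr2 hn

lemma secA : ∀ y ∈ NSA k r, ((y : ZMod n) - 1) ∈ (NRA k r).image (fun x : ℕ => (x : ZMod n)) := by
  intro y hy
  rcases mem_NSA.mp hy with rfl | ⟨j, hj, rfl⟩
  · have h1 : ((2 * (k - 3 - r) + 3 * r + 5 : ℕ) : ZMod n) = (0 : ZMod n) - 1 := by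
      have e1 : 2 * (k - 3 - r) + 3 * r + 5 + 1 = n := by omega
      have : ((2 * (k - 3 - r) + 3 * r + 5 : ℕ) : ZMod n) + 1 = ((n : ℕ) : ZMod n) := by
        rw [← e1]; push_cast; ring
      rw [ZMod.natCast_self] at this
      linear_combination this
    rw [Nat.cast_zero, ← h1]
    exact Finset.mem_image_of_mem _ (mem_NRA.mpr (Or.inr (Or.inr rfl)))
  · have h1 : ((9 + 2 * (k - 3 - r) + 3 * j : ℕ) : ZMod n) - 1
        = ((8 + 2 * (k - 3 - r) + 3 * j : ℕ) : ZMod n) := by push_cast; ring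
    rw [h1]
    exact Finset.mem_image_of_mem _ (mem_NRA.mpr (Or.inr (Or.inl ⟨j, hj, rfl⟩)))

lemma secB : ∀ y ∈ NSB k r, ((y : ZMod n) - 1) ∈ (NRB k r).image (fun x : ℕ => (x : ZMod n)) := by
  intro y hy
  rcases mem_NSB.mp hy with rfl | ⟨j, hj, rfl⟩
  · have h1 : ((5 : ℕ) : ZMod n) - 1 = ((4 : ℕ) : ZMod n) := by push_cast; ring
    rw [h1]
    exact Finset.mem_image_of_mem _ (mem_NRB.mpr (Or.inl (by omega)))
  · have h1 : ((10 + 2 * (k - 3 - r) + 3 * j : ℕ) : ZMod n) - 1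
        = ((9 + 2 * (k - 3 - r) + 3 * j : ℕ) : ZMod n) := by push_cast; ring
    rw [h1]
    exact Finset.mem_image_of_mem _ (mem_NRB.mpr (Or.inr (Or.inr ⟨j, hj, rfl⟩)))

lemma LA2 (C : Finset (ZMod n)) (hst : ∀ i ∈ C, i + 1 ∉ C) (hcard : C.card = k)
    (hdisj : Disjoint C ((NA k r).image (fun x : ℕ => (x : ZMod n)))) :
    ((2 : ℕ) : ZMod n) ∈ C := by
  refine forced (by omega) (NA k r) (NRA k r) (NSA k r) (hn ▸ NA_lt hk hr1 hr2)
    (hn ▸ NRA_lt hk hr1 hr2) (hn ▸ NSA_lt hk hr1 hr2) (hn ▸ coverA hk hr1 hr2)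
    (secA hk hr1 hr2 hn) (NRA_card hk hr1 hr2) 2 (by omega)
    (mem_NRA.mpr (Or.inl ⟨0, by omega, by omega⟩))
    (fun hc => by rcases mem_NSA.mp hc with h | ⟨j, hj, h⟩ <;> omega)
    C hst hcard hdisj

lemma LB2 (C : Finset (ZMod n)) (hst : ∀ i ∈ C, i + 1 ∉ C) (hcard : C.card = k)
    (hdisj : Disjoint C ((NB k r).image (fun x : ℕ => (x : ZMod n)))) :
    ((2 : ℕ) : ZMod n) ∈ C := by
  refine forced (by omega) (NB k r) (NRB k r) (NSB k r) (hn ▸ NB_lt hk hr1 hr2)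
    (hn ▸ NRB_lt hk hr1 hr2) (hn ▸ NSB_lt hk hr1 hr2) (hn ▸ coverB hk hr1 hr2)
    (secB hk hr1 hr2 hn) (NRB_card hk hr1 hr2) 2 (by omega)
    (mem_NRB.mpr (Or.inl (by omega)))
    (fun hc => by rcases mem_NSB.mp hc with h | ⟨j, hj, h⟩ <;> omega)
    C hst hcard hdisj

lemma LB7 (C : Finset (ZMod n)) (hst : ∀ i ∈ C, i + 1 ∉ C) (hcard : C.card = k)
    (hdisj : Disjoint C ((NB k r).image (fun x : ℕ => (x : ZMod n)))) :
    ((7 : ℕ) : ZMod n) ∈ C := by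
  refine forced (by omega) (NB k r) (NRB k r) (NSB k r) (hn ▸ NB_lt hk hr1 hr2)
    (hn ▸ NRB_lt hk hr1 hr2) (hn ▸ NSB_lt hk hr1 hr2) (hn ▸ coverB hk hr1 hr2)
    (secB hk hr1 hr2 hn) (NRB_card hk hr1 hr2) 7 (by omega)
    (mem_NRB.mpr (Or.inr (Or.inl ⟨0, by omega, by omega⟩)))
    (fun hc => by rcases mem_NSB.mp hc with h | ⟨j, hj, h⟩ <;> omega)
    C hst hcard hdisj

-- specific membership facts
lemma one_mem_A : ((1 : ℕ) : ZMod n) ∈ (NA k r).image (fun x : ℕ => (x : ZMod n)) :=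
  Finset.mem_image_of_mem _ (mem_NA.mpr (Or.inl (by omega)))

lemma one_mem_B : ((1 : ℕ) : ZMod n) ∈ (NB k r).image (fun x : ℕ => (x : ZMod n)) :=
  Finset.mem_image_of_mem _ (mem_NB.mpr (Or.inl (by omega)))

lemma seven_mem_A : ((7 : ℕ) : ZMod n) ∈ (NA k r).image (fun x : ℕ => (x : ZMod n)) :=
  Finset.mem_image_of_mem _ (mem_NA.mpr (Or.inr (Or.inl ⟨0, by omega, by omega⟩)))

lemma five_mem_A : ((5 : ℕ) : ZMod n) ∈ (NA k r).image (fun x : ℕ => (x : ZMod n)) :=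
  Finset.mem_image_of_mem _ (mem_NA.mpr (Or.inl (by omega)))

lemma five_not_mem_B : ((5 : ℕ) : ZMod n) ∉ (NB k r).image (fun x : ℕ => (x : ZMod n)) := by
  intro hc
  have h5 : (5 : ℕ) ∈ NB k r := (mem_image_cast (hn ▸ NB_lt hk hr1 hr2) (by omega)).mp hc
  rcases mem_NB.mp h5 with h | ⟨i, hi, h⟩ | ⟨j, hj, h⟩ <;> omega

end inst

-- generic: no walk shorter than 4
lemma no_short_walk {V : Type*} {G : SimpleGraph V} {a b : V} (h0 : a ≠ b)
    (h1 : ¬ G.Adj a b) (h2 : ∀ c, G.Adj a c → ¬ G.Adj c b)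
    (h3 : ∀ c d, G.Adj a c → G.Adj c d → ¬ G.Adj d b) (p : G.Walk a b) : 4 ≤ p.length := by
  match p with
  | .nil => exact absurd rfl h0
  | .cons h .nil => exact absurd h h1
  | .cons h (.cons h' .nil) => exact absurd h' (h2 _ h)
  | .cons h (.cons h' (.cons h'' .nil)) => exact absurd h'' (h3 _ _ h h')
  | .cons _ (.cons _ (.cons _ (.cons _ q))) =>
      simp only [SimpleGraph.Walk.length_cons]; omega

section graph
variable {n k : ℕ}

lemma zmod_one_ne_zero (hn : 2 ≤ n) : (1 : ZMod n) ≠ 0 := by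
  intro h
  have : ((1 : ℕ) : ZMod n) = 0 := by exact_mod_cast h
  have := (ZMod.natCast_eq_zero_iff 1 n).mp this
  have := Nat.le_of_dvd (by omega) this
  omega

-- shift set
lemma shift_props (hn : 2 ≤ n) (S : Finset (ZMod n)) (hcard : S.card = k) (hst : Stable2 n S) :
    (S.image (· + 1)).card = k ∧ Stable2 n (S.image (· + 1)) ∧ Disjoint S (S.image (· + 1)) := by
  refine ⟨?_, ?_, ?_⟩
  · rw [Finset.card_image_of_injective _ (add_left_injective 1)]; exact hcard
  · intro i hi hi1
    obtain ⟨y, hy, rfl⟩ := Finset.mem_image.mp hi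
    obtain ⟨z, hz, hze⟩ := Finset.mem_image.mp hi1
    have : z = y + 1 := by linear_combination hze
    exact hst y hy (this ▸ hz)
  · rw [Finset.disjoint_left]
    intro x hx hx'
    obtain ⟨y, hy, rfl⟩ := Finset.mem_image.mp hx'
    exact hst y hy hx

lemma move_props (hn : 2 ≤ n) (S : Finset (ZMod n)) (hcard : S.card = k) (hst : Stable2 n S)
    (x : ZMod n) (hx : x ∈ S) (hx2 : x - 2 ∉ S) :
    (insert (x - 1) (S.erase x)).card = k ∧ Stable2 n (insert (x - 1) (S.erase x)) ∧
      Disjoint (insert (x - 1) (S.erase x)) (S.image (· + 1)) := by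
  have hxm1 : x - 1 ∉ S := by
    intro h
    have := hst (x - 1) h
    rw [sub_add_cancel] at this
    exact this hx
  have hxx1 : x - 1 ≠ x := by
    intro h
    have h1 : (1 : ZMod n) = 0 := by linear_combination -h
    exact zmod_one_ne_zero hn h1
  refine ⟨?_, ?_, ?_⟩
  · rw [Finset.card_insert_of_notMem (fun hc => hxm1 (Finset.mem_of_mem_erase hc)),
      Finset.card_erase_of_mem hx, hcard]
    have : 1 ≤ k := hcard ▸ Finset.card_pos.mpr ⟨x, hx⟩
    omega
  · intro i hi hi1
    rcases Finset.mem_insert.mp hi with rfl | hi'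
    · rw [sub_add_cancel] at hi1
      rcases Finset.mem_insert.mp hi1 with h | h
      · exact hxx1 h.symm
      · exact (Finset.notMem_erase x S) h
    · have hiS := Finset.mem_of_mem_erase hi'
      rcases Finset.mem_insert.mp hi1 with h | h
      · apply hx2
        have : i = x - 2 := by linear_combination h
        exact this ▸ hiS
      · exact hst i hiS (Finset.mem_of_mem_erase h)
  · rw [Finset.disjoint_left]
    intro z hz hz'
    obtain ⟨y, hy, rfl⟩ := Finset.mem_image.mp hz'
    rcases Finset.mem_insert.mp hz with h | h
    · apply hx2
      have : y = x - 2 := by linear_combination h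
      exact this ▸ hy
    · exact hst y hy (Finset.mem_of_mem_erase h)

-- canonical vertex
def VstarZ (n k : ℕ) : Finset (ZMod n) := (range k).image (fun i => ((2 * i : ℕ) : ZMod n))

lemma Vstar_card (hnk : 2 * k + 2 ≤ n) : (VstarZ n k).card = k := by
  rw [VstarZ, Finset.card_image_of_injOn, Finset.card_range]
  intro a ha b hb h
  simp only [Finset.coe_range, Set.mem_Iio] at ha hb
  have := cast_inj_lt (a := 2 * a) (b := 2 * b) (by omega) (by omega) h
  omega

lemma Vstar_stable (hnk : 2 * k + 2 ≤ n) : Stable2 n (VstarZ n k) := by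
  intro i hi hi1
  obtain ⟨a, ha, rfl⟩ := Finset.mem_image.mp hi
  obtain ⟨b, hb, hbe⟩ := Finset.mem_image.mp hi1
  rw [Finset.mem_range] at ha hb
  have : ((2 * b : ℕ) : ZMod n) = ((2 * a + 1 : ℕ) : ZMod n) := by push_cast at hbe ⊢; linear_combination hbe
  have := cast_inj_lt (a := 2 * b) (b := 2 * a + 1) (by omega) (by omega) this
  omega

-- descent
lemma descent (hnk : 2 * k + 2 ≤ n) (hk : 1 ≤ k) (S : Finset (ZMod n)) (hcard : S.card = k)
    (hne : S ≠ VstarZ n k) : ∃ x ∈ S, x ≠ 0 ∧ x - 2 ∉ S := by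
  haveI : NeZero n := ⟨by omega⟩
  by_contra hcon
  push_neg at hcon
  replace hcon : ∀ x ∈ S, x ≠ 0 → x - 2 ∈ S := fun x hx h0 => (hcon x hx h0)
  have DL : ∀ m, m < n → (m : ZMod n) ∈ S → ∀ j, j ≤ m → j % 2 = m % 2 → (j : ZMod n) ∈ S := by
    intro m
    induction m using Nat.strong_induction_on with
    | _ m IH =>
      intro hmn hmS j hj hpar
      rcases eq_or_lt_of_le hj with rfl | hlt
      · exact hmS
      · have hm2 : 2 ≤ m := by omega
        have hne0 : (m : ZMod n) ≠ 0 := by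
          intro h
          have := (ZMod.natCast_eq_zero_iff m n).mp h
          have := Nat.le_of_dvd (by omega) this
          omega
        have h2 : ((m - 2 : ℕ) : ZMod n) ∈ S := by
          have hc : (m : ZMod n) - 2 ∈ S := hcon _ hmS hne0
          have he : ((m - 2 : ℕ) : ZMod n) = (m : ZMod n) - 2 := by
            rw [Nat.cast_sub hm2]; norm_num
          rwa [he]
        exact IH (m - 2) (by omega) (by omega) h2 j (by omega) (by omega)
  have h1S : ((1 : ℕ) : ZMod n) ∉ S := by
    intro h1
    have hm1 : ((n - 1 : ℕ) : ZMod n) ∈ S := by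
      have hc : ((1 : ℕ) : ZMod n) - 2 ∈ S := hcon _ h1 (by rw [Nat.cast_one]; exact zmod_one_ne_zero (by omega))
      have he : ((n - 1 : ℕ) : ZMod n) = ((1 : ℕ) : ZMod n) - 2 := by
        have : ((n - 1 : ℕ) : ZMod n) + 1 = ((n : ℕ) : ZMod n) := by
          rw [Nat.cast_sub (by omega)]; ring
        rw [ZMod.natCast_self] at this
        push_cast
        linear_combination this
      rwa [he]
    have hsub : (range (k + 1)).image (fun i => ((n - 1 - 2 * i : ℕ) : ZMod n)) ⊆ S := by
      intro z hz
      obtain ⟨i, hi, rfl⟩ := Finset.mem_image.mp hz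
      rw [Finset.mem_range] at hi
      exact DL (n - 1) (by omega) hm1 (n - 1 - 2 * i) (by omega) (by omega)
    have hcardT : ((range (k + 1)).image (fun i => ((n - 1 - 2 * i : ℕ) : ZMod n))).card = k + 1 := by
      rw [Finset.card_image_of_injOn, Finset.card_range]
      intro a ha b hb h
      simp only [Finset.coe_range, Set.mem_Iio] at ha hb
      have := cast_inj_lt (a := n - 1 - 2 * a) (b := n - 1 - 2 * b) (by omega) (by omega) h
      omega
    have := Finset.card_le_card hsub
    omega
  have h0S : (0 : ZMod n) ∈ S := by
    obtain ⟨x, hxS, hmin⟩ := Finset.exists_min_image S (fun z => z.val) (Finset.card_pos.mp (by omega))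
    by_cases hx0 : x = 0
    · exact hx0 ▸ hxS
    have hvne : x.val ≠ 0 := fun h => hx0 (by rw [← ZMod.natCast_zmod_val x, h]; simp)
    have hval1 : x.val ≠ 1 := by
      intro h
      apply h1S
      have : x = ((1 : ℕ) : ZMod n) := by rw [← ZMod.natCast_zmod_val x, h]
      exact this ▸ hxS
    have hx2 : x - 2 ∈ S := hcon x hxS hx0
    have hrepr : x - 2 = ((x.val - 2 : ℕ) : ZMod n) := by
      rw [Nat.cast_sub (by omega)]
      rw [ZMod.natCast_zmod_val x]
      norm_num
    have hvx2 : (x - 2).val = x.val - 2 := by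
      rw [hrepr, ZMod.val_cast_of_lt (by have := ZMod.val_lt x; omega)]
    have := hmin _ hx2
    simp only [hvx2] at this
    omega
  have heven : ∀ x ∈ S, x.val % 2 = 0 := by
    intro x hx
    by_contra hodd
    apply h1S
    have hxr : (x.val : ZMod n) ∈ S := by rw [ZMod.natCast_zmod_val x]; exact hx
    exact DL x.val (ZMod.val_lt x) hxr 1 (by omega) (by omega)
  obtain ⟨x, hxS, hmax⟩ := Finset.exists_max_image S (fun z => z.val) (Finset.card_pos.mp (by omega))
  have hTsub2 : (range (x.val / 2 + 1)).image (fun i => ((2 * i : ℕ) : ZMod n)) ⊆ S := by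
    intro z hz
    obtain ⟨i, hi, rfl⟩ := Finset.mem_image.mp hz
    rw [Finset.mem_range] at hi
    have hxr : (x.val : ZMod n) ∈ S := by rw [ZMod.natCast_zmod_val x]; exact hxS
    exact DL x.val (ZMod.val_lt x) hxr (2 * i) (by have := heven x hxS; omega)
      (by have := heven x hxS; omega)
  have hTsub : S ⊆ (range (x.val / 2 + 1)).image (fun i => ((2 * i : ℕ) : ZMod n)) := by
    intro y hy
    refine Finset.mem_image.mpr ⟨y.val / 2, Finset.mem_range.mpr (by have := hmax y hy; omega), ?_⟩
    have h2 : 2 * (y.val / 2) = y.val := by have := heven y hy; omega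
    rw [h2, ZMod.natCast_zmod_val y]
  have hSeq : S = (range (x.val / 2 + 1)).image (fun i => ((2 * i : ℕ) : ZMod n)) :=
    Finset.Subset.antisymm hTsub hTsub2
  have hcardT : ((range (x.val / 2 + 1)).image (fun i => ((2 * i : ℕ) : ZMod n))).card
      = x.val / 2 + 1 := by
    rw [Finset.card_image_of_injOn, Finset.card_range]
    intro a ha b hb h
    simp only [Finset.coe_range, Set.mem_Iio] at ha hb
    have hb' := ZMod.val_lt x
    have := cast_inj_lt (a := 2 * a) (b := 2 * b) (by omega) (by omega) h
    omega
  have hkval : x.val / 2 + 1 = k := by rw [hSeq] at hcard; rw [hcardT] at hcard; exact hcard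
  apply hne
  rw [hSeq, hkval, VstarZ]

-- build vertices and adjacency
lemma SG_adj_of_disjoint (hk : 1 ≤ k) (u w : SGVert n k) (hd : Disjoint u.1 w.1) :
    (SG n k).Adj u w := by
  show u ≠ w ∧ Disjoint u.1 w.1
  refine ⟨?_, hd⟩
  intro h
  subst h
  have hemp : u.1 = ∅ := Finset.eq_empty_of_forall_notMem
    (fun a ha => (Finset.disjoint_left.mp hd) ha ha)
  have hc := u.2.1
  rw [hemp, Finset.card_empty] at hc
  omega

lemma reach_vstar (hnk : 2 * k + 2 ≤ n) (hk : 1 ≤ k) :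
    ∀ N : ℕ, ∀ v : SGVert n k, v.1.sum (fun z => z.val) ≤ N →
      (SG n k).Reachable v ⟨VstarZ n k, Vstar_card hnk, Vstar_stable hnk⟩ := by
  have hn2 : 2 ≤ n := by omega
  intro N
  induction N with
  | zero =>
    intro v hsum
    by_cases hveq : v.1 = VstarZ n k
    · exact by rw [show v = ⟨VstarZ n k, Vstar_card hnk, Vstar_stable hnk⟩ from Subtype.ext hveq]; exact SimpleGraph.Reachable.refl _
    · obtain ⟨x, hx, hx0, hx2⟩ := descent hnk hk v.1 v.2.1 hveq
      exfalso
      have hval : 1 ≤ x.val := by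
        rcases Nat.eq_zero_or_pos x.val with h | h
        · exfalso; apply hx0
          haveI : NeZero n := ⟨by omega⟩
          rw [← ZMod.natCast_zmod_val x, h]; simp
        · exact h
      have hle : x.val ≤ v.1.sum (fun z => z.val) :=
        Finset.single_le_sum (f := fun z : ZMod n => z.val) (fun i _ => Nat.zero_le _) hx
      omega
  | succ N IH =>
    intro v hsum
    by_cases hveq : v.1 = VstarZ n k
    · exact by rw [show v = ⟨VstarZ n k, Vstar_card hnk, Vstar_stable hnk⟩ from Subtype.ext hveq]; exact SimpleGraph.Reachable.refl _
    · obtain ⟨x, hx, hx0, hx2⟩ := descent hnk hk v.1 v.2.1 hveq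
      obtain ⟨hshc, hshs, hshd⟩ := shift_props hn2 v.1 v.2.1 v.2.2
      obtain ⟨hmc, hms, hmd⟩ := move_props hn2 v.1 v.2.1 v.2.2 x hx hx2
      set Sh : SGVert n k := ⟨v.1.image (· + 1), hshc, hshs⟩ with hSh
      set S' : SGVert n k := ⟨insert (x - 1) (v.1.erase x), hmc, hms⟩ with hS'
      have hadj1 : (SG n k).Adj v Sh := SG_adj_of_disjoint hk v Sh hshd
      have hadj2 : (SG n k).Adj S' Sh := SG_adj_of_disjoint hk S' Sh hmd
      have hsum' : S'.1.sum (fun z => z.val) ≤ N := by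
        haveI : NeZero n := ⟨by omega⟩
        have hxm1 : x - 1 ∉ v.1.erase x := by
          intro hc
          have h1 := Finset.mem_of_mem_erase hc
          have := v.2.2 (x - 1) h1
          rw [sub_add_cancel] at this
          exact this hx
        have e1 : S'.1.sum (fun z => z.val) = (x - 1).val + (v.1.erase x).sum (fun z => z.val) :=
          Finset.sum_insert hxm1
        have e2 : (v.1.erase x).sum (fun z => z.val) + x.val = v.1.sum (fun z => z.val) :=
          Finset.sum_erase_add _ _ hx
        have hval : 1 ≤ x.val := by
          rcases Nat.eq_zero_or_pos x.val with h | h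
          · exfalso; apply hx0; rw [← ZMod.natCast_zmod_val x, h]; simp
          · exact h
        have e3 : (x - 1).val = x.val - 1 := by
          have hrepr : x - 1 = ((x.val - 1 : ℕ) : ZMod n) := by
            rw [Nat.cast_sub (by omega), ZMod.natCast_zmod_val x]; norm_num
          rw [hrepr, ZMod.val_cast_of_lt (by have := ZMod.val_lt x; omega)]
        omega
      exact (hadj1.reachable.trans hadj2.reachable.symm).trans (IH S' hsum')

lemma preconn (hnk : 2 * k + 2 ≤ n) (hk : 1 ≤ k) (u v : SGVert n k) :
    (SG n k).Reachable u v := by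
  have h1 := reach_vstar hnk hk (u.1.sum (fun z => z.val)) u (le_refl _)
  have h2 := reach_vstar hnk hk (v.1.sum (fun z => z.val)) v (le_refl _)
  exact h1.trans h2.symm


end graph

theorem stmt16 (n k r : ℕ) (hk : 5 ≤ k) (hr1 : 2 ≤ r) (hr2 : r ≤ k - 3)
    (hn : n = 2 * k + r)
    (hA : ((({1, 3, 5} : Finset ℕ) ∪
        (Finset.range (k - 3 - r + 1)).image (fun i => 7 + 2 * i) ∪
        (Finset.Icc 1 (r - 1)).image (fun j => 7 + 2 * (k - 3 - r) + 3 * j)).image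
          (fun x : ℕ => (x : ZMod n))).card = k ∧
      Stable2 n ((({1, 3, 5} : Finset ℕ) ∪
        (Finset.range (k - 3 - r + 1)).image (fun i => 7 + 2 * i) ∪
        (Finset.Icc 1 (r - 1)).image (fun j => 7 + 2 * (k - 3 - r) + 3 * j)).image
          (fun x : ℕ => (x : ZMod n))))
    (hB : ((({1, 3, 6} : Finset ℕ) ∪
        (Finset.range (k - 3 - r + 1)).image (fun i => 8 + 2 * i) ∪
        (Finset.Icc 1 (r - 1)).image (fun j => 8 + 2 * (k - 3 - r) + 3 * j)).image
          (fun x : ℕ => (x : ZMod n))).card = k ∧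
      Stable2 n ((({1, 3, 6} : Finset ℕ) ∪
        (Finset.range (k - 3 - r + 1)).image (fun i => 8 + 2 * i) ∪
        (Finset.Icc 1 (r - 1)).image (fun j => 8 + 2 * (k - 3 - r) + 3 * j)).image
          (fun x : ℕ => (x : ZMod n)))) :
    4 ≤ (SG n k).dist ⟨_, hA⟩ ⟨_, hB⟩ ∧ 4 ≤ (SG n k).diam := by
  haveI : NeZero n := ⟨by omega⟩
  set vA : SGVert n k := ⟨_, hA⟩ with hvA
  set vB : SGVert n k := ⟨_, hB⟩ with hvB
  have hvA1 : vA.1 = (NA k r).image (fun x : ℕ => (x : ZMod n)) := rfl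
  have hvB1 : vB.1 = (NB k r).image (fun x : ℕ => (x : ZMod n)) := rfl
  have hreach : (SG n k).Reachable vA vB := preconn (by omega) (by omega) vA vB
  have hAB : vA ≠ vB := by
    intro h
    have h5A : ((5 : ℕ) : ZMod n) ∈ vA.1 := hvA1 ▸ five_mem_A hk hr1 hr2 hn
    rw [h] at h5A
    exact five_not_mem_B hk hr1 hr2 hn (hvB1 ▸ h5A)
  have hnadj : ¬ (SG n k).Adj vA vB := by
    rintro (⟨hne, hd⟩ : vA ≠ vB ∧ Disjoint vA.1 vB.1)
    exact (Finset.disjoint_left.mp hd (hvA1 ▸ one_mem_A hk hr1 hr2 hn))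
      (hvB1 ▸ one_mem_B hk hr1 hr2 hn)
  have h2 : ∀ c, (SG n k).Adj vA c → ¬ (SG n k).Adj c vB := by
    rintro c (⟨hne1, hd1⟩ : vA ≠ c ∧ Disjoint vA.1 c.1) (⟨hne2, hd2⟩ : c ≠ vB ∧ Disjoint c.1 vB.1)
    have h7c : ((7 : ℕ) : ZMod n) ∈ c.1 :=
      LB7 hk hr1 hr2 hn c.1 c.2.2 c.2.1 (hvB1 ▸ hd2)
    exact (Finset.disjoint_left.mp hd1 (hvA1 ▸ seven_mem_A hk hr1 hr2 hn)) h7c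
  have h3 : ∀ c d, (SG n k).Adj vA c → (SG n k).Adj c d → ¬ (SG n k).Adj d vB := by
    rintro c d (⟨hne1, hd1⟩ : vA ≠ c ∧ Disjoint vA.1 c.1) (⟨hne2, hd2⟩ : c ≠ d ∧ Disjoint c.1 d.1)
      (⟨hne3, hd3⟩ : d ≠ vB ∧ Disjoint d.1 vB.1)
    have h2c : ((2 : ℕ) : ZMod n) ∈ c.1 :=
      LA2 hk hr1 hr2 hn c.1 c.2.2 c.2.1 (hvA1 ▸ hd1.symm)
    have h2d : ((2 : ℕ) : ZMod n) ∈ d.1 :=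
      LB2 hk hr1 hr2 hn d.1 d.2.2 d.2.1 (hvB1 ▸ hd3)
    exact (Finset.disjoint_left.mp hd2 h2c) h2d
  obtain ⟨p, hp⟩ := hreach.exists_walk_length_eq_dist
  have hd4 : 4 ≤ (SG n k).dist vA vB := by
    rw [← hp]
    exact no_short_walk hAB hnadj h2 h3 p
  refine ⟨hd4, ?_⟩
  haveI hfin : Finite (SGVert n k) := by
    unfold SGVert
    infer_instance
  haveI : Nonempty (SGVert n k) := ⟨vA⟩
  have hne_top : (SG n k).ediam ≠ ⊤ := by
    obtain ⟨u, w, huw⟩ := SimpleGraph.exists_edist_eq_ediam_of_finite (G := SG n k)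
    rw [← huw]
    exact SimpleGraph.edist_ne_top_iff_reachable.mpr (preconn (by omega) (by omega) u w)
  exact le_trans hd4 (SimpleGraph.dist_le_diam hne_top)
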